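/- The partial derivative of the Black-Scholes call price with respect to the initial stock price is Φ(d): ∂/∂x c(x,K,r,T,σ) = Φ((ln(x/K) + T(r + σ²/2))/(σ√T)) for all x > 0, where c(x,K,r,T,σ) = x·Φ(d) − K·e^{−rT}·Φ(d − σ√T) with d = (ln(x/K) + T(r + σ²/2))/(σ√T). -/

import Mathlib

open MeasureTheory ProbabilityTheory Real Set

noncomputable def Phi (x : ℝ) : ℝ :=
  ∫ y in Set.Iic x, (Real.sqrt (2 * Real.pi))⁻¹ * Real.exp (-(y ^ 2) / 2)

noncomputable def phi (y : ℝ) : ℝ := (Real.sqrt (2 * Real.pi))⁻¹ * Real.exp (-(y ^ 2) / 2)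

noncomputable def dBS (S₀ K r T σ : ℝ) : ℝ :=
  (Real.log (S₀ / K) + T * (r + σ ^ 2 / 2)) / (σ * Real.sqrt T)

noncomputable def callBS (S₀ K r T σ : ℝ) : ℝ :=
  S₀ * Phi (dBS S₀ K r T σ) - K * Real.exp (-(r * T)) * Phi (dBS S₀ K r T σ - σ * Real.sqrt T)

noncomputable def putBS (S₀ K r T σ : ℝ) : ℝ :=
  callBS S₀ K r T σ - S₀ + K * Real.exp (-(r * T))

lemma phi_cont : Continuous phi := by
  unfold phi; continuity

lemma phi_integrable : Integrable phi := by
  have h : Integrable (fun y : ℝ => Real.exp (-(1/2 : ℝ) * y ^ 2)) :=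
    integrable_exp_neg_mul_sq (by norm_num)
  have h2 := h.const_mul (Real.sqrt (2 * Real.pi))⁻¹
  refine h2.congr (Filter.Eventually.of_forall fun y => ?_)
  unfold phi; ring_nf

lemma hasDerivAt_Phi (x : ℝ) : HasDerivAt Phi (phi x) x := by
  have key : Phi = fun y => Phi 0 + ∫ t in (0:ℝ)..y, phi t := by
    funext y
    have := intervalIntegral.integral_Iic_sub_Iic (μ := volume) (f := phi) (a := 0) (b := y)
      phi_integrable.integrableOn phi_integrable.integrableOn
    unfold Phi phi at *
    linarith
  rw [key]
  have h := intervalIntegral.integral_hasDerivAt_right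
    ((phi_integrable.intervalIntegrable (a := 0) (b := x)))
    (phi_cont.stronglyMeasurableAtFilter _ _)
    phi_cont.continuousAt
  exact h.const_add (Phi 0)

theorem stmt2 (K σ T r : ℝ) (hK : 0 < K) (hσ : 0 < σ) (hT : 0 < T) (hr : 0 ≤ r) :
    ∀ x : ℝ, 0 < x →
      HasDerivAt (fun y => callBS y K r T σ) (Phi (dBS x K r T σ)) x := by
  intro x hx
  set s : ℝ := σ * Real.sqrt T with hs
  have hs0 : 0 < s := mul_pos hσ (Real.sqrt_pos.mpr hT)
  set dx : ℝ := dBS x K r T σ with hdx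
  set A : ℝ := K * Real.exp (-(r * T)) with hA
  -- derivative of d
  have hd : HasDerivAt (fun y => dBS y K r T σ) (1 / (x * s)) x := by
    have hlog : HasDerivAt (fun y : ℝ => Real.log (y / K)) x⁻¹ x := by
      have h1 : HasDerivAt (fun y : ℝ => Real.log y - Real.log K) x⁻¹ x :=
        (Real.hasDerivAt_log hx.ne').sub_const _
      refine h1.congr_of_eventuallyEq ?_
      filter_upwards [eventually_gt_nhds hx] with y hy
      rw [Real.log_div hy.ne' hK.ne']
    have h2 := (hlog.add_const (T * (r + σ ^ 2 / 2))).div_const s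
    have : x⁻¹ / s = 1 / (x * s) := by field_simp
    rw [this] at h2
    exact h2
  have hD1 : HasDerivAt (fun y => Phi (dBS y K r T σ)) (phi dx * (1 / (x * s))) x :=
    by have h0 := (hasDerivAt_Phi dx).comp x hd; exact h0
  have hD2 : HasDerivAt (fun y => Phi (dBS y K r T σ - s)) (phi (dx - s) * (1 / (x * s))) x :=
    by have h0 := (hasDerivAt_Phi (dx - s)).comp x (hd.sub_const s); exact h0
  have hcall : HasDerivAt (fun y => callBS y K r T σ)
      (1 * Phi dx + x * (phi dx * (1 / (x * s))) - A * (phi (dx - s) * (1 / (x * s)))) x := by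
    have hmul := (hasDerivAt_id x).mul hD1
    have := hmul.sub (hD2.const_mul A)
    exact this
  -- key identity
  have hds : dx * s = Real.log (x / K) + T * (r + σ ^ 2 / 2) := by
    rw [hdx, dBS, ← hs]
    field_simp
  have hs2 : s ^ 2 = σ ^ 2 * T := by
    rw [hs, mul_pow, Real.sq_sqrt hT.le]
  have hid : x * phi dx = A * phi (dx - s) := by
    unfold phi
    rw [show (-((dx - s) ^ 2) / 2 : ℝ) = -(dx ^ 2) / 2 + (dx * s - s ^ 2 / 2) by ring]
    rw [Real.exp_add, hds, hs2]
    rw [show Real.log (x / K) + T * (r + σ ^ 2 / 2) - σ ^ 2 * T / 2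
        = Real.log (x / K) + r * T by ring]
    rw [Real.exp_add, Real.exp_log (div_pos hx hK), hA, Real.exp_neg]
    field_simp
  have hfinal : 1 * Phi dx + x * (phi dx * (1 / (x * s))) - A * (phi (dx - s) * (1 / (x * s)))
      = Phi dx := by
    have : A * (phi (dx - s) * (1 / (x * s))) = x * (phi dx * (1 / (x * s))) := by
      rw [← mul_assoc, ← mul_assoc, ← hid]; ring
    rw [this]; ring
  rw [← hfinal]
  exact hcall
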